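/- Let X be a real Banach space and let f : X → ℝ be strongly ideally quasiconvex, i.e., every strict lower level set F_α = {x ∈ X : f(x) < α} (α ∈ ℝ) is ideally convex. Then f is quasiconvex and densely continuous and, for any m ∈ ℝ which is the topological essential infimum of f, the set F_m = {x ∈ X : f(x) < m} is nowhere dense. -/

import Mathlib

open Filter Topology Set MeasureTheory

/-- `f` is quasiconvex: `f (l•x + (1-l)•y) ≤ max (f x) (f y)` for `l ∈ [0,1]`. -/
def QuasiconvexFun {X : Type*} [AddCommGroup X] [Module ℝ X] (f : X → ℝ) : Prop :=
  ∀ x y : X, ∀ l : ℝ, l ∈ Set.Icc (0 : ℝ) 1 →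
    f (l • x + (1 - l) • y) ≤ max (f x) (f y)

/-- `f` is strictly quasiconvex. -/
def StrictlyQuasiconvexFun {X : Type*} [AddCommGroup X] [Module ℝ X] (f : X → ℝ) : Prop :=
  ∀ x y : X, x ≠ y → ∀ l : ℝ, l ∈ Set.Ioo (0 : ℝ) 1 →
    f (l • x + (1 - l) • y) < max (f x) (f y)

/-- `f` is densely continuous: its set of points of continuity is dense. -/
def DenselyContinuous {X : Type*} [TopologicalSpace X] (f : X → ℝ) : Prop :=
  Dense {x : X | ContinuousAt f x}

/-- `m` is the topological essential infimum of `f`: the strict sublevel set `{f < α}`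
is meager for `α < m` and nonmeager for `α > m`. -/
def IsTopEssInf {X : Type*} [TopologicalSpace X] (f : X → ℝ) (m : ℝ) : Prop :=
  (∀ α : ℝ, α < m → IsMeagre {x : X | f x < α}) ∧
  (∀ α : ℝ, m < α → ¬ IsMeagre {x : X | f x < α})

/-- Aronszajn null set: a Borel set `N` such that for every sequence `ξ` with dense linear
span, `N` decomposes as a countable union of Borel sets, the `n`-th of which has Lebesgue
null intersection with every line of direction `ξ n`. -/
def AronszajnNull {X : Type*} [NormedAddCommGroup X] [NormedSpace ℝ X]
    [MeasurableSpace X] (N : Set X) : Prop :=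
  MeasurableSet N ∧
  ∀ ξ : ℕ → X, Dense (Submodule.span ℝ (Set.range ξ) : Set X) →
    ∃ Nn : ℕ → Set X, N = ⋃ n, Nn n ∧
      ∀ n, MeasurableSet (Nn n) ∧
        ∀ x : X, MeasureTheory.volume {t : ℝ | x + t • ξ n ∈ Nn n} = 0

/-- Haar null set: `E` is contained in a Borel set `B` for which there is a Borel
probability measure vanishing on all translates of `B`. -/
def HaarNull {X : Type*} [AddCommGroup X] [TopologicalSpace X]
    [MeasurableSpace X] (E : Set X) : Prop :=
  ∃ B : Set X, E ⊆ B ∧ MeasurableSet B ∧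
    ∃ μ : MeasureTheory.Measure X, MeasureTheory.IsProbabilityMeasure μ ∧
      ∀ x : X, μ ((fun y => x + y) '' B) = 0

/-- Hadamard differentiability of `f` at `x`. -/
def HadamardDiffAt {X : Type*} [NormedAddCommGroup X] [NormedSpace ℝ X]
    (f : X → ℝ) (x : X) : Prop :=
  ∃ L : X →L[ℝ] ℝ, ∀ h : X, ∀ t : ℕ → ℝ, (∀ n, t n ≠ 0) →
    Tendsto t atTop (𝓝 0) → ∀ hs : ℕ → X, Tendsto hs atTop (𝓝 h) →
      Tendsto (fun n => (f (x + t n • hs n) - f x) / t n) atTop (𝓝 (L h))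

/-- Hadamard differentiability at `x` of a function whose relevant values are those on `V`. -/
def HadamardDiffWithinAt {X : Type*} [NormedAddCommGroup X] [NormedSpace ℝ X]
    (f : X → ℝ) (V : Set X) (x : X) : Prop :=
  ∃ L : X →L[ℝ] ℝ, ∀ h : X, ∀ t : ℕ → ℝ, (∀ n, t n ≠ 0) →
    Tendsto t atTop (𝓝 0) → ∀ hs : ℕ → X, Tendsto hs atTop (𝓝 h) →
      (∀ n, x + t n • hs n ∈ V) →
      Tendsto (fun n => (f (x + t n • hs n) - f x) / t n) atTop (𝓝 (L h))

/-- Gâteaux differentiability of `f` at `x` with derivative `L`. -/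
def GateauxDiffAt {X : Type*} [NormedAddCommGroup X] [NormedSpace ℝ X]
    (f : X → ℝ) (x : X) (L : X →L[ℝ] ℝ) : Prop :=
  ∀ h : X, Tendsto (fun t : ℝ => (f (x + t • h) - f x) / t) (𝓝[≠] 0) (𝓝 (L h))

/-- Essential Gâteaux differentiability of `f` at `x`: directional derivatives exist and
are given by a continuous linear functional for a comeager (residual) set of directions
in the unit sphere. -/
def EssGateauxDiffAt {X : Type*} [NormedAddCommGroup X] [NormedSpace ℝ X]
    (f : X → ℝ) (x : X) : Prop :=
  ∃ L : X →L[ℝ] ℝ, ∃ Ω : Set (Metric.sphere (0 : X) 1), IsMeagre Ωᶜ ∧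
    ∀ h ∈ Ω, Tendsto (fun t : ℝ => (f (x + t • (h : X)) - f x) / t) (𝓝[≠] 0) (𝓝 (L (h : X)))

/-- `K` is a closed convex cone. -/
def IsClosedConvexCone {X : Type*} [NormedAddCommGroup X] [NormedSpace ℝ X] (K : Set X) : Prop :=
  IsClosed K ∧ Convex ℝ K ∧ ∀ l : ℝ, 0 ≤ l → ∀ k ∈ K, l • k ∈ K

/-- `f` is `K`-nondecreasing on `U`. -/
def KNondecreasingOn {X : Type*} [AddCommGroup X] [Module ℝ X]
    (f : X → ℝ) (K U : Set X) : Prop :=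
  ∀ u ∈ U, ∀ k ∈ K, k ≠ 0 → u + k ∈ U → f u ≤ f (u + k)

/-- Ideally convex subset: stable under infinite convex combinations of bounded sequences. -/
def IdeallyConvex {X : Type*} [NormedAddCommGroup X] [NormedSpace ℝ X] (C : Set X) : Prop :=
  ∀ (x : ℕ → X) (lam : ℕ → ℝ), (∀ n, x n ∈ C) → Bornology.IsBounded (Set.range x) →
    (∀ n, lam n ∈ Set.Icc (0 : ℝ) 1) → HasSum lam 1 →
      ∑' n, lam n • x n ∈ C

/-- `C‡`: the union, over finite dimensional subspaces `Z ⊆ X`, of the closures of `C ∩ Z`. -/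
def Ddag {X : Type*} [NormedAddCommGroup X] [NormedSpace ℝ X] (C : Set X) : Set X :=
  ⋃ (Z : Submodule ℝ X) (_ : FiniteDimensional ℝ Z), closure (C ∩ (Z : Set X))

/-- A normed space is reflexive if the canonical inclusion into its double dual is onto. -/
def IsReflexiveSpace (X : Type*) [NormedAddCommGroup X] [NormedSpace ℝ X] : Prop :=
  Function.Surjective (NormedSpace.inclusionInDoubleDual ℝ X)

theorem aux_idealLif {X : Type*} [NormedAddCommGroup X] [NormedSpace ℝ X] [CompleteSpace X]
    {C : Set X} (hC : IdeallyConvex C) : interior (closure C) ⊆ C := by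
  intro x hx
  obtain ⟨ε, hε, hball⟩ := Metric.mem_nhds_iff.1 (mem_interior_iff_mem_nhds.1 hx)
  have key : ∀ u : X, ‖u - x‖ ≤ ε/4 → ∃ d, d ∈ C ∧ ‖(x + (2:ℝ) • (u - x)) - d‖ ≤ ε/4 ∧ ‖d - x‖ ≤ ε := by
    intro u hu
    have h2 : x + (2:ℝ) • (u - x) ∈ closure C := by
      apply hball
      simp only [Metric.mem_ball, dist_eq_norm]
      have : ‖x + (2:ℝ) • (u - x) - x‖ = 2 * ‖u - x‖ := by
        rw [add_sub_cancel_left, norm_smul]; norm_num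
      rw [this]; linarith
    obtain ⟨d, hdC, hdd⟩ := Metric.mem_closure_iff.1 h2 (ε/4) (by linarith)
    refine ⟨d, hdC, ?_, ?_⟩
    · rw [← dist_eq_norm]; linarith
    · have h1 : ‖d - (x + (2:ℝ)•(u-x))‖ ≤ ε/4 := by rw [← dist_eq_norm, dist_comm]; linarith
      have h2' : ‖(2:ℝ)•(u-x)‖ ≤ ε/2 := by rw [norm_smul]; simp; linarith
      have e : d - x = (d - (x + (2:ℝ)•(u-x))) + (2:ℝ)•(u-x) := by module
      rw [e]
      have := norm_add_le (d - (x + (2:ℝ)•(u-x))) ((2:ℝ)•(u-x))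
      linarith
  -- iterate
  let T := {u : X // ‖u - x‖ ≤ ε/4}
  let step : T → T := fun u => ⟨(2:ℝ) • u.1 - (key u.1 u.2).choose, by
    have h := (key u.1 u.2).choose_spec.2.1
    have : (2:ℝ) • u.1 - (key u.1 u.2).choose - x
        = (x + (2:ℝ) • (u.1 - x)) - (key u.1 u.2).choose := by module
    rw [this]; exact h⟩
  let U : ℕ → T := fun n => step^[n] ⟨x, by simp; positivity⟩
  let d : ℕ → X := fun n => (key (U n).1 (U n).2).choose
  have hd : ∀ n, d n ∈ C ∧ ‖d n - x‖ ≤ ε := fun n =>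
    ⟨(key (U n).1 (U n).2).choose_spec.1, (key (U n).1 (U n).2).choose_spec.2.2⟩
  have hU : ∀ n, (U (n+1)).1 = (2:ℝ) • (U n).1 - d n := by
    intro n
    show (step^[n+1] _).1 = _
    rw [Function.iterate_succ_apply']
  have hS : ∀ n, ∑ k ∈ Finset.range n, ((1:ℝ)/2)^(k+1) • d k = x - ((1:ℝ)/2)^n • (U n).1 := by
    intro n
    induction n with
    | zero =>
      show _ = x - ((1:ℝ)/2)^0 • (step^[0] ⟨x, _⟩ : T).1
      simp
    | succ n ih =>
      rw [Finset.sum_range_succ, ih, hU n]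
      have h2 : ((1:ℝ)/2)^(n+1) = ((1:ℝ)/2)^n * (1/2) := pow_succ _ _
      rw [h2]
      module
  -- summability
  have hnorm : ∀ n, ‖((1:ℝ)/2)^(n+1) • d n‖ ≤ ((1:ℝ)/2)^(n+1) * (‖x‖ + ε) := by
    intro n
    rw [norm_smul]
    have h1 : ‖d n‖ ≤ ‖x‖ + ε := by
      have := norm_add_le (d n - x) x
      simp only [sub_add_cancel] at this
      linarith [(hd n).2]
    have h2 : |((1:ℝ)/2)^(n+1)| = ((1:ℝ)/2)^(n+1) := abs_of_pos (by positivity)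
    rw [Real.norm_eq_abs, h2]
    exact mul_le_mul_of_nonneg_left h1 (by positivity)
  have hsummable : Summable (fun n => ((1:ℝ)/2)^(n+1) • d n) := by
    apply Summable.of_norm_bounded ?_ hnorm
    have base : Summable (fun n : ℕ => ((1:ℝ)/2)^n) :=
      summable_geometric_of_lt_one (by norm_num) (by norm_num)
    exact ((base.mul_right (‖x‖ + ε)).mul_left ((1:ℝ)/2)).congr
      (fun n => by rw [pow_succ]; ring)
  have htends : Tendsto (fun n => ((1:ℝ)/2)^n • (U n).1) atTop (𝓝 0) := by
    apply squeeze_zero_norm (a := fun n => ((1:ℝ)/2)^n * (‖x‖ + ε/4 + ε/4))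
    · intro n
      rw [norm_smul, Real.norm_eq_abs, abs_of_pos (by positivity)]
      apply mul_le_mul_of_nonneg_left _ (by positivity)
      have := norm_add_le ((U n).1 - x) x
      simp only [sub_add_cancel] at this
      have hb := (U n).2
      linarith [norm_nonneg x]
    · have := (tendsto_pow_atTop_nhds_zero_of_lt_one (by norm_num : (0:ℝ) ≤ 1/2)
        (by norm_num : (1:ℝ)/2 < 1)).mul_const (‖x‖ + ε/4 + ε/4)
      simpa using this
  have hhs : HasSum (fun n => ((1:ℝ)/2)^(n+1) • d n) x := by
    rw [hsummable.hasSum_iff_tendsto_nat]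
    have : (fun n => ∑ k ∈ Finset.range n, ((1:ℝ)/2)^(k+1) • d k)
        = fun n => x - ((1:ℝ)/2)^n • (U n).1 := funext hS
    rw [this]
    simpa using tendsto_const_nhds.sub htends
  have hlam : HasSum (fun n => ((1:ℝ)/2)^(n+1)) 1 := by
    have := hasSum_geometric_two' 1
    apply this.congr_fun
    intro n
    rw [pow_succ, div_pow, one_pow]
    ring
  have := hC d (fun n => ((1:ℝ)/2)^(n+1)) (fun n => (hd n).1)
    (Bornology.IsBounded.subset (Metric.isBounded_closedBall (x := x) (r := ε))
      (by rintro _ ⟨n, rfl⟩; simpa [Metric.mem_closedBall, dist_eq_norm] using (hd n).2))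
    (fun n => ⟨by positivity, by
      apply pow_le_one₀ <;> norm_num⟩) hlam
  rwa [hhs.tsum_eq] at this


/-- A strongly ideally quasiconvex function (all strict sublevel sets `{f < α}` ideally
convex) is quasiconvex, densely continuous, and `{f < m}` is nowhere dense for the
topological essential infimum `m`. -/
theorem stmt_7 {X : Type*} [NormedAddCommGroup X] [NormedSpace ℝ X] [CompleteSpace X]
    (f : X → ℝ) (h : ∀ α : ℝ, IdeallyConvex {x : X | f x < α}) :
    QuasiconvexFun f ∧ DenselyContinuous f ∧
      ∀ m : ℝ, IsTopEssInf f m → IsNowhereDense {x : X | f x < m} := by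
  have hqc : QuasiconvexFun f := by
    intro x y l hl
    by_contra hcon
    push_neg at hcon
    set α := f (l • x + (1 - l) • y) with hα
    set xs : ℕ → X := fun n => if n = 0 then x else y with hxs
    set lam : ℕ → ℝ := fun n => if n = 0 then l else if n = 1 then 1 - l else 0 with hlam
    have hfx : f x < α := lt_of_le_of_lt (le_max_left _ _) hcon
    have hfy : f y < α := lt_of_le_of_lt (le_max_right _ _) hcon
    have hmem : ∀ n, xs n ∈ {z : X | f z < α} := by
      intro n
      by_cases h0 : n = 0 <;> simp [hxs, h0, Set.mem_setOf_eq, hfx, hfy]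
    have hbdd : Bornology.IsBounded (Set.range xs) := by
      apply (Set.toFinite ({x, y} : Set X)).isBounded.subset
      rintro _ ⟨n, rfl⟩
      by_cases h0 : n = 0 <;> simp [hxs, h0]
    have hIcc : ∀ n, lam n ∈ Set.Icc (0:ℝ) 1 := by
      intro n
      obtain ⟨hl0, hl1⟩ := hl
      by_cases h0 : n = 0
      · simp [hlam, h0]; constructor <;> linarith
      · by_cases h1 : n = 1 <;> simp [hlam, h0, h1] <;> constructor <;> linarith
    have hne : ∀ n ∉ ({0, 1} : Finset ℕ), lam n = 0 := by
      intro n hn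
      simp only [Finset.mem_insert, Finset.mem_singleton, not_or] at hn
      simp [hlam, hn.1, hn.2]
    have hsum1 : HasSum lam 1 := by
      have := hasSum_sum_of_ne_finset_zero (L := SummationFilter.unconditional ℕ) (s := ({0,1} : Finset ℕ)) hne
      rwa [show (∑ b ∈ ({0,1} : Finset ℕ), lam b) = 1 by
        rw [Finset.sum_pair (by norm_num : (0:ℕ) ≠ 1)]; simp [hlam]] at this
    have hne2 : ∀ n ∉ ({0, 1} : Finset ℕ), lam n • xs n = 0 := by
      intro n hn; rw [hne n hn, zero_smul]
    have hsum2 : HasSum (fun n => lam n • xs n) (l • x + (1 - l) • y) := by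
      have := hasSum_sum_of_ne_finset_zero (L := SummationFilter.unconditional ℕ) (s := ({0,1} : Finset ℕ)) hne2
      rwa [show (∑ b ∈ ({0,1} : Finset ℕ), lam b • xs b) = l • x + (1 - l) • y by
        rw [Finset.sum_pair (by norm_num : (0:ℕ) ≠ 1)]; simp [hlam, hxs]] at this
    have hmain := h α xs lam hmem hbdd hIcc hsum1
    rw [hsum2.tsum_eq] at hmain
    exact absurd hmain (lt_irrefl α)
  refine ⟨hqc, ?_, ?_⟩
  · -- dense continuity
    set E : ℚ → Set X := fun q => closure {z : X | f z < (q:ℝ)} \ interior {z : X | f z < (q:ℝ)}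
      with hE
    have hEclosed : ∀ q, IsClosed (E q) := fun q => isClosed_closure.sdiff isOpen_interior
    have hEnd : ∀ q, IsNowhereDense (E q) := by
      intro q
      rw [(hEclosed q).isNowhereDense_iff, Set.eq_empty_iff_forall_notMem]
      intro z hz
      have h1 : z ∈ E q := interior_subset hz
      have h2 : z ∈ interior {y : X | f y < (q:ℝ)} := by
        have h3 : z ∈ interior (closure {y : X | f y < (q:ℝ)}) :=
          interior_mono Set.diff_subset hz
        exact interior_maximal (aux_idealLif (h (q:ℝ))) isOpen_interior h3
      exact h1.2 h2
    have hmeag : Dense (⋃ q : ℚ, E q)ᶜ := by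
      apply dense_of_mem_residual
      rw [Set.compl_iUnion]
      refine countable_iInter_mem.mpr fun q => residual_of_dense_open
        (hEclosed q).isOpen_compl ?_
      exact (isClosed_isNowhereDense_iff_compl.1 ⟨hEclosed q, hEnd q⟩).2
    apply hmeag.mono
    intro z hz
    simp only [Set.mem_compl_iff, Set.mem_iUnion, not_exists] at hz
    rw [Set.mem_setOf_eq, ContinuousAt, tendsto_order]
    constructor
    · intro b hb
      obtain ⟨q, hq1, hq2⟩ := exists_rat_btwn hb
      have hnot : z ∉ closure {y : X | f y < (q:ℝ)} := by
        intro hcl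
        by_cases hi : z ∈ interior {y : X | f y < (q:ℝ)}
        · exact absurd (interior_subset hi) (by simp only [Set.mem_setOf_eq]; linarith)
        · exact hz q ⟨hcl, hi⟩
      filter_upwards [isClosed_closure.isOpen_compl.mem_nhds hnot] with y hy
      by_contra hfy
      push_neg at hfy
      exact hy (subset_closure (show f y < (q:ℝ) by linarith))
    · intro b hb
      obtain ⟨q, hq1, hq2⟩ := exists_rat_btwn hb
      have hzint : z ∈ interior {y : X | f y < (q:ℝ)} := by
        have hcl : z ∈ closure {y : X | f y < (q:ℝ)} := subset_closure hq1
        by_contra hni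
        exact hz q ⟨hcl, hni⟩
      filter_upwards [isOpen_interior.mem_nhds hzint] with y hy
      have hy2 := interior_subset hy
      simp only [Set.mem_setOf_eq] at hy2
      linarith
  · -- nowhere density of F_m
    intro m hm
    have hunion : {x : X | f x < m} = ⋃ n : ℕ, {x : X | f x < m - 1/((n:ℝ)+1)} := by
      ext z
      simp only [Set.mem_setOf_eq, Set.mem_iUnion]
      constructor
      · intro hz
        obtain ⟨n, hn⟩ := exists_nat_one_div_lt (show (0:ℝ) < m - f z by linarith)
        exact ⟨n, by linarith⟩
      · rintro ⟨n, hn⟩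
        have : (0:ℝ) < 1/((n:ℝ)+1) := by positivity
        linarith
    have hmeag : IsMeagre {x : X | f x < m} := by
      rw [hunion]
      refine isMeagre_iUnion fun n => hm.1 _ ?_
      have : (0:ℝ) < 1/((n:ℝ)+1) := by positivity
      linarith
    have hint : interior {x : X | f x < m} = ∅ := by
      have hd : Dense {x : X | f x < m}ᶜ := dense_of_mem_residual hmeag
      rwa [← interior_eq_empty_iff_dense_compl] at hd
    have hsub : interior (closure {x : X | f x < m}) ⊆ interior {x : X | f x < m} :=
      interior_maximal (aux_idealLif (h m)) isOpen_interior
    rw [hint] at hsub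
    exact Set.subset_empty_iff.1 hsub
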